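/- Performance difference lemma: in a finite discounted MDP, for any two policies π, π̃ and initial distribution ρ, V^π_ρ − V^{π̃}_ρ = (1/(1−γ)) E_{s ∼ d^π_ρ} [⟨Q^{π̃}_s, π_s − π̃_s⟩], where Q^{π̃}_s is the vector of Q-values of π̃ at state s. -/
import Mathlib


noncomputable section

/-- One step of the state-distribution dynamics induced by policy `π`. -/
def stepDist {S A : Type*} [Fintype S] [Fintype A]
    (P : S → A → S → ℝ) (π : S → A → ℝ) (μ : S → ℝ) : S → ℝ :=
  fun s' => ∑ s, ∑ a, μ s * π s a * P s a s'

/-- `stateDist P π ρ t s = P^π_{s₀∼ρ}(s_t = s)`. -/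
def stateDist {S A : Type*} [Fintype S] [Fintype A]
    (P : S → A → S → ℝ) (π : S → A → ℝ) (ρ : S → ℝ) : ℕ → S → ℝ
  | 0 => ρ
  | t + 1 => stepDist P π (stateDist P π ρ t)

/-- The discounted state-visitation distribution `d^π_ρ`. -/
def visitation {S A : Type*} [Fintype S] [Fintype A]
    (P : S → A → S → ℝ) (π : S → A → ℝ) (γ : ℝ) (ρ : S → ℝ) : S → ℝ :=
  fun s => (1 - γ) * ∑' t : ℕ, γ ^ t * stateDist P π ρ t s

/-- The value function `V^π_s`, the expected discounted cumulative cost starting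
from state `s` and following policy `π`. -/
def valueV {S A : Type*} [Fintype S] [Fintype A] [DecidableEq S]
    (P : S → A → S → ℝ) (π : S → A → ℝ) (c : S → A → ℝ) (γ : ℝ) : S → ℝ :=
  fun s => ∑' t : ℕ, γ ^ t *
    ∑ s', stateDist P π (fun s'' => if s'' = s then 1 else 0) t s' * ∑ a, π s' a * c s' a

/-- The Q-value function `Q^π_{s,a}`. -/
def valueQ {S A : Type*} [Fintype S] [Fintype A] [DecidableEq S]
    (P : S → A → S → ℝ) (π : S → A → ℝ) (c : S → A → ℝ) (γ : ℝ) : S → A → ℝ :=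
  fun s a => c s a + γ * ∑ s', P s a s' * valueV P π c γ s'

section aux

variable {S A : Type*} [Fintype S] [Fintype A]

lemma stateDist_nonneg (P : S → A → S → ℝ) (π : S → A → ℝ) (ρ : S → ℝ)
    (hP0 : ∀ s a s', 0 ≤ P s a s') (hπ0 : ∀ s a, 0 ≤ π s a) (hρ0 : ∀ s, 0 ≤ ρ s) :
    ∀ t s, 0 ≤ stateDist P π ρ t s := by
  intro t
  induction t with
  | zero => exact hρ0
  | succ t ih =>
    intro s'
    simp only [stateDist, stepDist]
    exact Finset.sum_nonneg fun s _ => Finset.sum_nonneg fun a _ =>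
      mul_nonneg (mul_nonneg (ih s) (hπ0 s a)) (hP0 s a s')

lemma stepDist_sum (P : S → A → S → ℝ) (π : S → A → ℝ) (μ : S → ℝ)
    (hP1 : ∀ s a, ∑ s', P s a s' = 1) (hπ1 : ∀ s, ∑ a, π s a = 1) :
    ∑ s', stepDist P π μ s' = ∑ s, μ s := by
  unfold stepDist
  rw [Finset.sum_comm]
  refine Finset.sum_congr rfl fun s _ => ?_
  rw [Finset.sum_comm]
  have h : ∀ a ∈ Finset.univ, ∑ s', μ s * π s a * P s a s' = μ s * π s a := fun a _ => by
    rw [← Finset.mul_sum, hP1 s a, mul_one]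
  rw [Finset.sum_congr rfl h, ← Finset.mul_sum, hπ1 s, mul_one]

lemma stateDist_sum (P : S → A → S → ℝ) (π : S → A → ℝ) (ρ : S → ℝ)
    (hP1 : ∀ s a, ∑ s', P s a s' = 1) (hπ1 : ∀ s, ∑ a, π s a = 1) (hρ1 : ∑ s, ρ s = 1) :
    ∀ t, ∑ s, stateDist P π ρ t s = 1 := by
  intro t
  induction t with
  | zero => exact hρ1
  | succ t ih =>
    show ∑ s, stepDist P π (stateDist P π ρ t) s = 1
    rw [stepDist_sum P π _ hP1 hπ1, ih]

lemma stateDist_le_one (P : S → A → S → ℝ) (π : S → A → ℝ) (ρ : S → ℝ)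
    (hP0 : ∀ s a s', 0 ≤ P s a s') (hP1 : ∀ s a, ∑ s', P s a s' = 1)
    (hπ0 : ∀ s a, 0 ≤ π s a) (hπ1 : ∀ s, ∑ a, π s a = 1)
    (hρ0 : ∀ s, 0 ≤ ρ s) (hρ1 : ∑ s, ρ s = 1) :
    ∀ t s, stateDist P π ρ t s ≤ 1 := by
  intro t s
  have h := Finset.single_le_sum (f := stateDist P π ρ t)
    (fun s' _ => stateDist_nonneg P π ρ hP0 hπ0 hρ0 t s') (Finset.mem_univ s)
  rwa [stateDist_sum P π ρ hP1 hπ1 hρ1 t] at h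

lemma summable_geom_bdd {γ : ℝ} (hγ0 : 0 ≤ γ) (hγ1 : γ < 1) (g : ℕ → ℝ) (C : ℝ)
    (hg : ∀ t, |g t| ≤ C) : Summable (fun t => γ ^ t * g t) := by
  apply Summable.of_abs
  refine Summable.of_nonneg_of_le (fun t => abs_nonneg _) (fun t => ?_)
    ((summable_geometric_of_lt_one hγ0 hγ1).mul_right C)
  rw [abs_mul, abs_pow, abs_of_nonneg hγ0]
  exact mul_le_mul_of_nonneg_left (hg t) (pow_nonneg hγ0 t)

lemma abs_dot_le (μ h : S → ℝ) (hμ0 : ∀ s, 0 ≤ μ s) (hμ1 : ∀ s, μ s ≤ 1) :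
    |∑ s, μ s * h s| ≤ ∑ s, |h s| := by
  calc |∑ s, μ s * h s| ≤ ∑ s, |μ s * h s| := Finset.abs_sum_le_sum_abs _ _
  _ ≤ ∑ s, |h s| := Finset.sum_le_sum fun s _ => by
      rw [abs_mul, abs_of_nonneg (hμ0 s)]
      exact mul_le_of_le_one_left (abs_nonneg _) (hμ1 s)

lemma summable_main (P : S → A → S → ℝ) (π : S → A → ℝ) (ρ : S → ℝ) {γ : ℝ}
    (hγ0 : 0 ≤ γ) (hγ1 : γ < 1)
    (hP0 : ∀ s a s', 0 ≤ P s a s') (hP1 : ∀ s a, ∑ s', P s a s' = 1)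
    (hπ0 : ∀ s a, 0 ≤ π s a) (hπ1 : ∀ s, ∑ a, π s a = 1)
    (hρ0 : ∀ s, 0 ≤ ρ s) (hρ1 : ∑ s, ρ s = 1) (h : S → ℝ) :
    Summable (fun t => γ ^ t * ∑ s, stateDist P π ρ t s * h s) :=
  summable_geom_bdd hγ0 hγ1 _ (∑ s, |h s|) fun t =>
    abs_dot_le _ _ (stateDist_nonneg P π ρ hP0 hπ0 hρ0 t)
      (stateDist_le_one P π ρ hP0 hP1 hπ0 hπ1 hρ0 hρ1 t)

lemma stateDist_linear [DecidableEq S] (P : S → A → S → ℝ) (π : S → A → ℝ) (ρ : S → ℝ) :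
    ∀ (t : ℕ) (s' : S), stateDist P π ρ t s' =
      ∑ s0, ρ s0 * stateDist P π (fun s'' => if s'' = s0 then 1 else 0) t s' := by
  intro t
  induction t with
  | zero =>
    intro s'
    simp [stateDist]
  | succ t ih =>
    intro s'
    simp only [stateDist, stepDist]
    simp_rw [ih, Finset.sum_mul, Finset.mul_sum, mul_assoc]
    conv_rhs => rw [Finset.sum_comm]
    exact Finset.sum_congr rfl fun s _ => Finset.sum_comm

lemma stateDist_succ (P : S → A → S → ℝ) (π : S → A → ℝ) (ρ : S → ℝ) :
    ∀ t, stateDist P π ρ (t + 1) = stateDist P π (stepDist P π ρ) t := by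
  intro t
  induction t with
  | zero => rfl
  | succ t ih =>
    show stepDist P π (stateDist P π ρ (t + 1)) = _
    rw [ih]; rfl

lemma stepDist_delta [DecidableEq S] (P : S → A → S → ℝ) (π : S → A → ℝ) (s s' : S) :
    stepDist P π (fun s'' => if s'' = s then 1 else 0) s' = ∑ a, π s a * P s a s' := by
  unfold stepDist
  rw [Finset.sum_eq_single s]
  · simp
  · intro u _ hu; simp [hu]
  · intro h; simp at h

end aux

section val

variable {S A : Type*} [Fintype S] [Fintype A] [DecidableEq S]
variable (P : S → A → S → ℝ) (π : S → A → ℝ) (c : S → A → ℝ) {γ : ℝ}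

lemma delta_nonneg (s0 s : S) : (0:ℝ) ≤ if s = s0 then 1 else 0 := by positivity
lemma delta_sum (s0 : S) : ∑ s, (if s = s0 then (1:ℝ) else 0) = 1 := by simp

lemma summable_value (hγ0 : 0 ≤ γ) (hγ1 : γ < 1)
    (hP0 : ∀ s a s', 0 ≤ P s a s') (hP1 : ∀ s a, ∑ s', P s a s' = 1)
    (hπ0 : ∀ s a, 0 ≤ π s a) (hπ1 : ∀ s, ∑ a, π s a = 1) (s0 : S) :
    Summable (fun t => γ ^ t * ∑ s', stateDist P π (fun s'' => if s'' = s0 then 1 else 0) t s' *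
      ∑ a, π s' a * c s' a) :=
  summable_main P π _ hγ0 hγ1 hP0 hP1 hπ0 hπ1 (fun s => delta_nonneg s0 s) (delta_sum s0) _

/-- linear decomposition of ρ-average of value function -/
lemma valueV_sum (hγ0 : 0 ≤ γ) (hγ1 : γ < 1)
    (hP0 : ∀ s a s', 0 ≤ P s a s') (hP1 : ∀ s a, ∑ s', P s a s' = 1)
    (hπ0 : ∀ s a, 0 ≤ π s a) (hπ1 : ∀ s, ∑ a, π s a = 1) (ρ : S → ℝ) :
    ∑ s, ρ s * valueV P π c γ s =
      ∑' t : ℕ, γ ^ t * ∑ s', stateDist P π ρ t s' * ∑ a, π s' a * c s' a := by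
  unfold valueV
  simp_rw [← tsum_mul_left]
  rw [← Summable.tsum_finsetSum (fun s _ => (summable_value P π c hγ0 hγ1 hP0 hP1 hπ0 hπ1 s).mul_left (ρ s))]
  refine tsum_congr fun t => ?_
  simp_rw [stateDist_linear P π ρ t, Finset.sum_mul, Finset.mul_sum]
  rw [Finset.sum_comm]
  exact Finset.sum_congr rfl fun s _ => Finset.sum_congr rfl fun s' _ =>
    Finset.sum_congr rfl fun a _ => by ring

lemma bellman (hγ0 : 0 ≤ γ) (hγ1 : γ < 1)
    (hP0 : ∀ s a s', 0 ≤ P s a s') (hP1 : ∀ s a, ∑ s', P s a s' = 1)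
    (hπ0 : ∀ s a, 0 ≤ π s a) (hπ1 : ∀ s, ∑ a, π s a = 1) (s : S) :
    valueV P π c γ s = (∑ a, π s a * c s a) +
      γ * ∑ s1, (∑ a, π s a * P s a s1) * valueV P π c γ s1 := by
  have hs := summable_value P π c hγ0 hγ1 hP0 hP1 hπ0 hπ1 s
  rw [show valueV P π c γ s = ∑' t : ℕ, γ ^ t *
      ∑ s', stateDist P π (fun s'' => if s'' = s then 1 else 0) t s' * ∑ a, π s' a * c s' a from rfl,
    Summable.tsum_eq_zero_add hs]
  congr 1
  · simp [stateDist, ite_mul]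
  · have h2 : ∀ t : ℕ, stateDist P π (fun s'' => if s'' = s then 1 else 0) (t + 1) =
        stateDist P π (fun s1 => ∑ a, π s a * P s a s1) t := by
      intro t
      rw [stateDist_succ]
      have he : stepDist P π (fun s'' => if s'' = s then 1 else 0)
          = fun s1 => ∑ a, π s a * P s a s1 := funext fun s1 => stepDist_delta P π s s1
      rw [he]
    simp_rw [h2, pow_succ', mul_assoc]
    rw [tsum_mul_left]
    congr 1
    exact (valueV_sum P π c hγ0 hγ1 hP0 hP1 hπ0 hπ1 _).symm

lemma pol_Q (πt : S → A → ℝ) (π' : S → A → ℝ) (s : S) :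
    ∑ a, valueQ P πt c γ s a * π' s a = (∑ a, π' s a * c s a) +
      γ * ∑ s1, (∑ a, π' s a * P s a s1) * valueV P πt c γ s1 := by
  simp_rw [valueQ, add_mul, Finset.sum_add_distrib]
  congr 1
  · exact Finset.sum_congr rfl fun a _ => mul_comm _ _
  · calc ∑ a, (γ * ∑ s', P s a s' * valueV P πt c γ s') * π' s a
        = ∑ a, ∑ s', γ * (π' s a * P s a s' * valueV P πt c γ s') := by
          refine Finset.sum_congr rfl fun a _ => ?_
          rw [Finset.mul_sum, Finset.sum_mul]
          exact Finset.sum_congr rfl fun s' _ => by ring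
      _ = γ * ∑ s1, (∑ a, π' s a * P s a s1) * valueV P πt c γ s1 := by
          rw [Finset.mul_sum, Finset.sum_comm]
          refine Finset.sum_congr rfl fun s1 _ => ?_
          rw [Finset.sum_mul, Finset.mul_sum]

end val

/-- Performance difference lemma. In a finite discounted MDP, for any
two policies `π, π̃` and initial distribution `ρ`,
`V^π_ρ - V^π̃_ρ = (1/(1-γ)) E_{s ∼ d^π_ρ} ⟨Q^π̃_s, π_s - π̃_s⟩`. -/
theorem performance_difference {S A : Type*} [Fintype S] [Fintype A] [DecidableEq S]
    (P : S → A → S → ℝ) (π πt : S → A → ℝ) (c : S → A → ℝ) (γ : ℝ) (ρ : S → ℝ)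
    (hγ0 : 0 < γ) (hγ1 : γ < 1)
    (hP0 : ∀ s a s', 0 ≤ P s a s') (hP1 : ∀ s a, ∑ s', P s a s' = 1)
    (hπ0 : ∀ s a, 0 ≤ π s a) (hπ1 : ∀ s, ∑ a, π s a = 1)
    (hπt0 : ∀ s a, 0 ≤ πt s a) (hπt1 : ∀ s, ∑ a, πt s a = 1)
    (hρ0 : ∀ s, 0 ≤ ρ s) (hρ1 : ∑ s, ρ s = 1) :
    (∑ s, ρ s * valueV P π c γ s) - (∑ s, ρ s * valueV P πt c γ s) =
      (1 / (1 - γ)) * ∑ s, visitation P π γ ρ s *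
        ∑ a, valueQ P πt c γ s a * (π s a - πt s a) := by
  have hγ0' : (0:ℝ) ≤ γ := hγ0.le
  have h1γ : (1:ℝ) - γ ≠ 0 := by linarith
  have hμ0 := stateDist_nonneg P π ρ hP0 hπ0 hρ0
  have hμ1 := stateDist_le_one P π ρ hP0 hP1 hπ0 hπ1 hρ0 hρ1
  have hsm : ∀ (h : S → ℝ), Summable (fun t => γ ^ t * ∑ s, stateDist P π ρ t s * h s) :=
    fun h => summable_main P π ρ hγ0' hγ1 hP0 hP1 hπ0 hπ1 hρ0 hρ1 h
  -- decomposition of the advantage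
  have hf : ∀ s, (∑ a, valueQ P πt c γ s a * (π s a - πt s a)) =
      (∑ a, π s a * c s a) + γ * (∑ s1, (∑ a, π s a * P s a s1) * valueV P πt c γ s1)
        - valueV P πt c γ s := by
    intro s
    have h1 : (∑ a, valueQ P πt c γ s a * (π s a - πt s a)) =
        (∑ a, valueQ P πt c γ s a * π s a) - ∑ a, valueQ P πt c γ s a * πt s a := by
      simp only [mul_sub, Finset.sum_sub_distrib]
    rw [h1, pol_Q P c πt π s, pol_Q P c πt πt s,
      ← bellman P πt c hγ0' hγ1 hP0 hP1 hπt0 hπt1 s]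
  -- one-step pushforward
  have hμsucc : ∀ t, ∑ s, stateDist P π ρ t s *
        (∑ s1, (∑ a, π s a * P s a s1) * valueV P πt c γ s1)
      = ∑ s1, stateDist P π ρ (t+1) s1 * valueV P πt c γ s1 := by
    intro t
    show _ = ∑ s1, stepDist P π (stateDist P π ρ t) s1 * valueV P πt c γ s1
    unfold stepDist
    calc ∑ s, stateDist P π ρ t s * ∑ s1, (∑ a, π s a * P s a s1) * valueV P πt c γ s1
        = ∑ s, ∑ s1, ∑ a, stateDist P π ρ t s * π s a * P s a s1 * valueV P πt c γ s1 := by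
          refine Finset.sum_congr rfl fun s _ => ?_
          rw [Finset.mul_sum]
          refine Finset.sum_congr rfl fun s1 _ => ?_
          rw [Finset.sum_mul, Finset.mul_sum]
          exact Finset.sum_congr rfl fun a _ => by ring
      _ = ∑ s1, (∑ s, ∑ a, stateDist P π ρ t s * π s a * P s a s1) * valueV P πt c γ s1 := by
          rw [Finset.sum_comm]
          refine Finset.sum_congr rfl fun s1 _ => ?_
          rw [Finset.sum_mul]
          exact Finset.sum_congr rfl fun s _ => (Finset.sum_mul _ _ _).symm
  -- summabilities for the telescoping
  have hA := hsm (fun s => ∑ a, π s a * c s a)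
  have hC := hsm (valueV P πt c γ)
  have hCs : Summable (fun t : ℕ =>
      γ ^ (t+1) * ∑ s, stateDist P π ρ (t+1) s * valueV P πt c γ s) :=
    hC.comp_injective Nat.succ_injective
  -- the key telescoping identity
  have hterm : ∀ t : ℕ, γ ^ t * ∑ s, stateDist P π ρ t s *
        ∑ a, valueQ P πt c γ s a * (π s a - πt s a)
      = (γ ^ t * ∑ s, stateDist P π ρ t s * ∑ a, π s a * c s a
          + γ ^ (t+1) * ∑ s1, stateDist P π ρ (t+1) s1 * valueV P πt c γ s1)
        - γ ^ t * ∑ s, stateDist P π ρ t s * valueV P πt c γ s := by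
    intro t
    have e1 : ∀ s, stateDist P π ρ t s *
        ((∑ a, π s a * c s a) + γ * (∑ s1, (∑ a, π s a * P s a s1) * valueV P πt c γ s1)
          - valueV P πt c γ s)
        = stateDist P π ρ t s * (∑ a, π s a * c s a)
          + γ * (stateDist P π ρ t s * ∑ s1, (∑ a, π s a * P s a s1) * valueV P πt c γ s1)
          - stateDist P π ρ t s * valueV P πt c γ s := fun s => by ring
    simp_rw [hf, e1]
    rw [Finset.sum_sub_distrib, Finset.sum_add_distrib, ← Finset.mul_sum, hμsucc t]
    ring
  have hT : ∑' t : ℕ, γ ^ t * ∑ s, stateDist P π ρ t s *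
        ∑ a, valueQ P πt c γ s a * (π s a - πt s a)
      = (∑ s, ρ s * valueV P π c γ s) - ∑ s, ρ s * valueV P πt c γ s := by
    have hsum1 : Summable (fun t : ℕ => γ ^ t * ∑ s, stateDist P π ρ t s *
        ∑ a, valueQ P πt c γ s a * (π s a - πt s a)) :=
      hsm _
    have hshift : (∑' t : ℕ, γ ^ t * ∑ s, stateDist P π ρ t s * valueV P πt c γ s)
        = (γ ^ 0 * ∑ s, stateDist P π ρ 0 s * valueV P πt c γ s)
          + ∑' t : ℕ, γ ^ (t+1) * ∑ s, stateDist P π ρ (t+1) s * valueV P πt c γ s :=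
      Summable.tsum_eq_zero_add hC
    have hD0 : γ ^ 0 * ∑ s, stateDist P π ρ 0 s * valueV P πt c γ s
        = ∑ s, ρ s * valueV P πt c γ s := by
      simp [stateDist]
    have hVρ : ∑ s, ρ s * valueV P π c γ s
        = ∑' t : ℕ, γ ^ t * ∑ s', stateDist P π ρ t s' * ∑ a, π s' a * c s' a :=
      valueV_sum P π c hγ0' hγ1 hP0 hP1 hπ0 hπ1 ρ
    calc ∑' t : ℕ, γ ^ t * ∑ s, stateDist P π ρ t s *
          ∑ a, valueQ P πt c γ s a * (π s a - πt s a)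
        = ∑' t : ℕ, ((γ ^ t * ∑ s, stateDist P π ρ t s * ∑ a, π s a * c s a
            + γ ^ (t+1) * ∑ s1, stateDist P π ρ (t+1) s1 * valueV P πt c γ s1)
          - γ ^ t * ∑ s, stateDist P π ρ t s * valueV P πt c γ s) := tsum_congr hterm
      _ = ((∑' t : ℕ, γ ^ t * ∑ s, stateDist P π ρ t s * ∑ a, π s a * c s a)
            + ∑' t : ℕ, γ ^ (t+1) * ∑ s1, stateDist P π ρ (t+1) s1 * valueV P πt c γ s1)
          - ∑' t : ℕ, γ ^ t * ∑ s, stateDist P π ρ t s * valueV P πt c γ s := by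
          rw [Summable.tsum_sub (hA.add hCs) hC, Summable.tsum_add hA hCs]
      _ = (∑ s, ρ s * valueV P π c γ s) - ∑ s, ρ s * valueV P πt c γ s := by
          rw [hVρ]
          linarith [hshift, hD0]
  -- the visitation identity
  have hkey : ∑ s, visitation P π γ ρ s * ∑ a, valueQ P πt c γ s a * (π s a - πt s a)
      = (1 - γ) * ∑' t : ℕ, γ ^ t * ∑ s, stateDist P π ρ t s *
          ∑ a, valueQ P πt c γ s a * (π s a - πt s a) := by
    have h1 : ∀ s, visitation P π γ ρ s * (∑ a, valueQ P πt c γ s a * (π s a - πt s a))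
        = (1 - γ) * ∑' t : ℕ, γ ^ t * (stateDist P π ρ t s *
            ∑ a, valueQ P πt c γ s a * (π s a - πt s a)) := by
      intro s
      rw [show visitation P π γ ρ s = (1 - γ) * ∑' t : ℕ, γ ^ t * stateDist P π ρ t s from rfl,
        mul_assoc, ← tsum_mul_right]
      congr 1
      exact tsum_congr fun t => mul_assoc _ _ _
    simp_rw [h1]
    rw [← Finset.mul_sum]
    congr 1
    have hs2 : ∀ s ∈ (Finset.univ : Finset S), Summable (fun t : ℕ => γ ^ t *
        (stateDist P π ρ t s * ∑ a, valueQ P πt c γ s a * (π s a - πt s a))) := by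
      intro s _
      refine summable_geom_bdd hγ0' hγ1 _
        (|∑ a, valueQ P πt c γ s a * (π s a - πt s a)|) fun t => ?_
      rw [abs_mul, abs_of_nonneg (hμ0 t s)]
      exact mul_le_of_le_one_left (abs_nonneg _) (hμ1 t s)
    rw [← Summable.tsum_finsetSum hs2]
    exact tsum_congr fun t => (Finset.mul_sum _ _ _).symm
  rw [hkey, hT, one_div, inv_mul_cancel_left₀ h1γ]
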